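/- arXiv:2001.06162 — 4 statements merged into one kernel-verified Lean document; each statement's English description precedes it below -/
import Mathlib

section
/- There is no permutation a₁, …, a₇ of {1, 2, …, 7} such that the weights w(1) = a₁ + a₂, w(5) = a₄ + a₅ + a₆ equal a common value x, the weights w(3) = a₂ + a₃ + a₄, w(7) = a₆ + a₇ equal a common value y, and x ≠ y. -/
/-- Weight of position `i` (1-based) in a sequence of length `m` given by `a`:
the sum of `a i` and its existing neighbors. -/
def seqWeight (m : Nat) (a : Nat → Nat) (i : Nat) : Nat :=
  (if 2 ≤ i then a (i-1) else 0) + a i + (if i + 1 ≤ m then a (i+1) else 0)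

set_option maxHeartbeats 4000000 in
lemma stmt1_aux (a1 a2 a3 a4 a5 a6 a7 x y : ℕ)
    (hxy : x ≠ y)
    (h1 : a1 + a2 = x) (h2 : a4 + a5 + a6 = x) (h3 : a2 + a3 + a4 = y) (h4 : a6 + a7 = y)
    (hsum : a1 + a2 + a3 + a4 + a5 + a6 + a7 = 28)
    (b1 : 1 ≤ a1 ∧ a1 ≤ 7) (b2 : 1 ≤ a2 ∧ a2 ≤ 7) (b3 : 1 ≤ a3 ∧ a3 ≤ 7)
    (b4 : 1 ≤ a4 ∧ a4 ≤ 7) (b5 : 1 ≤ a5 ∧ a5 ≤ 7) (b6 : 1 ≤ a6 ∧ a6 ≤ 7)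
    (b7 : 1 ≤ a7 ∧ a7 ≤ 7)
    (n25 : a2 ≠ a5) (n36 : a3 ≠ a6) (n26 : a2 ≠ a6) (n15 : a1 ≠ a5)
    (n37 : a3 ≠ a7) (n16 : a1 ≠ a6) (n27 : a2 ≠ a7) (n14 : a1 ≠ a4)
    (n47 : a4 ≠ a7) (n17 : a1 ≠ a7) (n13 : a1 ≠ a3) (n46 : a4 ≠ a6) : False := by
  obtain ⟨c1, c1'⟩ := b4
  obtain ⟨c2, c2'⟩ := b6
  interval_cases a4 <;> interval_cases a6 <;> omega

theorem stmt1 :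
    ¬ ∃ a : ℕ → ℕ, Set.BijOn a (Set.Icc 1 7) (Set.Icc 1 7) ∧
      ∃ x y : ℕ, x ≠ y ∧
        a 1 + a 2 = x ∧ a 4 + a 5 + a 6 = x ∧
        a 2 + a 3 + a 4 = y ∧ a 6 + a 7 = y := by
  rintro ⟨a, hbij, x, y, hxy, h1, h2, h3, h4⟩
  obtain ⟨hmaps, hinj, hsurj⟩ := hbij
  have mem : ∀ i : ℕ, 1 ≤ i → i ≤ 7 → i ∈ Set.Icc (1:ℕ) 7 := by
    intro i h1 h2; exact Set.mem_Icc.mpr ⟨h1, h2⟩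
  have hb : ∀ i : ℕ, 1 ≤ i → i ≤ 7 → 1 ≤ a i ∧ a i ≤ 7 := by
    intro i hi1 hi2
    exact Set.mem_Icc.mp (hmaps (mem i hi1 hi2))
  have hne : ∀ i j : ℕ, 1 ≤ i → i ≤ 7 → 1 ≤ j → j ≤ 7 → i ≠ j → a i ≠ a j := by
    intro i j hi1 hi2 hj1 hj2 hij heq
    exact hij (hinj (mem i hi1 hi2) (mem j hj1 hj2) heq)
  -- sum of values is 28
  have hsum' : ∑ i ∈ Finset.Icc 1 7, a i = ∑ i ∈ Finset.Icc 1 7, i := by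
    apply Finset.sum_bij (fun i _ => a i)
    · intro i hi
      rw [Finset.mem_Icc] at hi ⊢
      exact Set.mem_Icc.mp (hmaps (Set.mem_Icc.mpr hi))
    · intro i hi j hj hij
      rw [Finset.mem_Icc] at hi hj
      exact hinj (Set.mem_Icc.mpr hi) (Set.mem_Icc.mpr hj) hij
    · intro j hj
      rw [Finset.mem_Icc] at hj
      obtain ⟨i, hi, hai⟩ := hsurj (Set.mem_Icc.mpr hj)
      rw [Set.mem_Icc] at hi
      exact ⟨i, Finset.mem_Icc.mpr hi, hai⟩
    · intro i _; rfl
  have hexp : ∀ f : ℕ → ℕ, ∑ i ∈ Finset.Icc 1 7, f i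
      = f 1 + f 2 + f 3 + f 4 + f 5 + f 6 + f 7 := by
    intro f
    show ∑ i ∈ Finset.Icc 1 7, f i = _
    rw [show (7:ℕ) = 6+1 by rfl, Finset.sum_Icc_succ_top (by norm_num),
        show (6:ℕ) = 5+1 by rfl, Finset.sum_Icc_succ_top (by norm_num),
        show (5:ℕ) = 4+1 by rfl, Finset.sum_Icc_succ_top (by norm_num),
        show (4:ℕ) = 3+1 by rfl, Finset.sum_Icc_succ_top (by norm_num),
        show (3:ℕ) = 2+1 by rfl, Finset.sum_Icc_succ_top (by norm_num),
        show (2:ℕ) = 1+1 by rfl, Finset.sum_Icc_succ_top (by norm_num),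
        Finset.Icc_self, Finset.sum_singleton]
  have hsum : a 1 + a 2 + a 3 + a 4 + a 5 + a 6 + a 7 = 28 := by
    have := hsum'
    rw [hexp a, hexp (fun i => i)] at this
    omega
  have b1 := hb 1 (by norm_num) (by norm_num)
  have b2 := hb 2 (by norm_num) (by norm_num)
  have b3 := hb 3 (by norm_num) (by norm_num)
  have b4 := hb 4 (by norm_num) (by norm_num)
  have b5 := hb 5 (by norm_num) (by norm_num)
  have b6 := hb 6 (by norm_num) (by norm_num)
  have b7 := hb 7 (by norm_num) (by norm_num)
  have n25 := hne 2 5 (by norm_num) (by norm_num) (by norm_num) (by norm_num) (by norm_num)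
  have n36 := hne 3 6 (by norm_num) (by norm_num) (by norm_num) (by norm_num) (by norm_num)
  have n26 := hne 2 6 (by norm_num) (by norm_num) (by norm_num) (by norm_num) (by norm_num)
  have n15 := hne 1 5 (by norm_num) (by norm_num) (by norm_num) (by norm_num) (by norm_num)
  have n37 := hne 3 7 (by norm_num) (by norm_num) (by norm_num) (by norm_num) (by norm_num)
  have n16 := hne 1 6 (by norm_num) (by norm_num) (by norm_num) (by norm_num) (by norm_num)
  have n27 := hne 2 7 (by norm_num) (by norm_num) (by norm_num) (by norm_num) (by norm_num)
  have n14 := hne 1 4 (by norm_num) (by norm_num) (by norm_num) (by norm_num) (by norm_num)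
  have n47 := hne 4 7 (by norm_num) (by norm_num) (by norm_num) (by norm_num) (by norm_num)
  have n17 := hne 1 7 (by norm_num) (by norm_num) (by norm_num) (by norm_num) (by norm_num)
  have n13 := hne 1 3 (by norm_num) (by norm_num) (by norm_num) (by norm_num) (by norm_num)
  have n46 := hne 4 6 (by norm_num) (by norm_num) (by norm_num) (by norm_num) (by norm_num)
  exact stmt1_aux (a 1) (a 2) (a 3) (a 4) (a 5) (a 6) (a 7) x y hxy h1 h2 h3 h4 hsum
    b1 b2 b3 b4 b5 b6 b7 n25 n36 n26 n15 n37 n16 n27 n14 n47 n17 n13 n46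
end

section
/- For every integer k ≥ 2, there exists a permutation a₁, …, a_m of {1, …, m} with m = 8k − 1 such that every position i ≡ 1 (mod 4) has weight 9k − 1 and every position i ≡ 3 (mod 4) has weight 11k − 2. -/
set_option maxHeartbeats 1000000


/-- The permutation for `k = 2`. -/
def a2 (i : ℕ) : ℕ :=
  if i = 1 then 11 else if i = 2 then 6 else if i = 3 then 13 else if i = 4 then 1
  else if i = 5 then 12 else if i = 6 then 4 else if i = 7 then 14 else if i = 8 then 2
  else if i = 9 then 8 else if i = 10 then 7 else if i = 11 then 10 else if i = 12 then 3
  else if i = 13 then 9 else if i = 14 then 5 else 15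

def af2 (k j : ℕ) : ℕ :=
  if j ≤ k/2 then 2*k + j - 1
  else if j = k/2 + 1 then 4*k - (k/2 + 1)
  else if j ≤ k then 2*k + j - 2
  else if j + k/2 + 1 ≤ 2*k then 2*k + j - 1
  else if j + 1 ≤ 2*k then 2*k + j
  else 3*k - 1

def af0 (k j : ℕ) : ℕ :=
  if j ≤ k then k + j - 1 else j - k

def af3 (k j : ℕ) : ℕ :=
  if j ≤ k/2 then 8*k - 2*j
  else if j = k/2 + 1 then 6*k - 1
  else if j ≤ k then 8*k + 1 - 2*j
  else if j + k/2 + 1 ≤ 2*k then 10*k - (2*j + 1)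
  else if j + 1 ≤ 2*k then 10*k - (2*j + 2)
  else 8*k - 1

def af1 (k j : ℕ) : ℕ :=
  if j = 0 then 7*k - 1
  else if j + 1 ≤ k/2 then 6*k - 2*j
  else if j = k/2 then 4*k + 1
  else if j + 1 ≤ k then 6*k + 1 - 2*j
  else if j = k then 4*k
  else if j + k/2 + 2 ≤ 2*k then 8*k - (2*j + 1)
  else if j + 2 ≤ 2*k then 8*k - (2*j + 2)
  else 5*k + 1

/-- The general permutation for `k ≥ 3`. -/
def af (k i : ℕ) : ℕ :=
  if i % 4 = 2 then af2 k ((i+2)/4)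
  else if i % 4 = 0 then af0 k (i/4)
  else if i % 4 = 3 then af3 k ((i+1)/4)
  else af1 k ((i-1)/4)

def C2 (k j v : ℕ) : Prop :=
  (j ≤ k/2 ∧ v + 1 = 2*k + j) ∨
  (j = k/2 + 1 ∧ v + k/2 + 1 = 4*k) ∨
  (k/2 + 2 ≤ j ∧ j ≤ k ∧ v + 2 = 2*k + j) ∨
  (k + 1 ≤ j ∧ j + k/2 + 1 ≤ 2*k ∧ v + 1 = 2*k + j) ∨
  (2*k ≤ j + k/2 ∧ j + 1 ≤ 2*k ∧ v = 2*k + j) ∨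
  (2*k ≤ j ∧ v + 1 = 3*k)

def C0 (k j v : ℕ) : Prop :=
  (j ≤ k ∧ v + 1 = k + j) ∨ (k + 1 ≤ j ∧ v + k = j)

def C3 (k j v : ℕ) : Prop :=
  (j ≤ k/2 ∧ v + 2*j = 8*k) ∨
  (j = k/2 + 1 ∧ v + 1 = 6*k) ∨
  (k/2 + 2 ≤ j ∧ j ≤ k ∧ v + 2*j = 8*k + 1) ∨
  (k + 1 ≤ j ∧ j + k/2 + 1 ≤ 2*k ∧ v + 2*j + 1 = 10*k) ∨
  (2*k ≤ j + k/2 ∧ j + 1 ≤ 2*k ∧ v + 2*j + 2 = 10*k) ∨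
  (2*k ≤ j ∧ v + 1 = 8*k)

def C1 (k j v : ℕ) : Prop :=
  (j = 0 ∧ v + 1 = 7*k) ∨
  (1 ≤ j ∧ j + 1 ≤ k/2 ∧ v + 2*j = 6*k) ∨
  (1 ≤ j ∧ j = k/2 ∧ v = 4*k + 1) ∨
  (k/2 + 1 ≤ j ∧ j + 1 ≤ k ∧ v + 2*j = 6*k + 1) ∨
  (k/2 + 1 ≤ j ∧ j = k ∧ v = 4*k) ∨
  (k + 1 ≤ j ∧ j + k/2 + 2 ≤ 2*k ∧ v + 2*j + 1 = 8*k) ∨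
  (k + 1 ≤ j ∧ 2*k ≤ j + k/2 + 1 ∧ j + 2 ≤ 2*k ∧ v + 2*j + 2 = 8*k) ∨
  (2*k ≤ j + 1 ∧ v = 5*k + 1)

lemma haf2 (k j : ℕ) (hk : 3 ≤ k) : C2 k j (af2 k j) := by
  unfold af2; split_ifs <;> (unfold C2; omega)

lemma haf0 (k j : ℕ) (hk : 3 ≤ k) : C0 k j (af0 k j) := by
  unfold af0; split_ifs <;> (unfold C0; omega)

lemma haf3 (k j : ℕ) (hk : 3 ≤ k) : C3 k j (af3 k j) := by
  unfold af3; split_ifs <;> (unfold C3; omega)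

lemma haf1 (k j : ℕ) (hk : 3 ≤ k) : C1 k j (af1 k j) := by
  unfold af1; split_ifs <;> (unfold C1; omega)

/-- Characterization of values of `af`. -/
def D (k i v : ℕ) : Prop :=
  (i % 4 = 2 ∧ C2 k ((i+2)/4) v) ∨
  (i % 4 = 0 ∧ C0 k (i/4) v) ∨
  (i % 4 = 3 ∧ C3 k ((i+1)/4) v) ∨
  (i % 4 = 1 ∧ C1 k ((i-1)/4) v)

lemma achar (k i : ℕ) (hk : 3 ≤ k) : D k i (af k i) := by
  unfold af
  split_ifs with h2 h0 h3
  · exact Or.inl ⟨h2, haf2 k _ hk⟩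
  · exact Or.inr (Or.inl ⟨h0, haf0 k _ hk⟩)
  · exact Or.inr (Or.inr (Or.inl ⟨h3, haf3 k _ hk⟩))
  · exact Or.inr (Or.inr (Or.inr ⟨by omega, haf1 k _ hk⟩))

/-- Characterization of values of `a2`. -/
def D2 (i v : ℕ) : Prop :=
  (i = 1 ∧ v = 11) ∨ (i = 2 ∧ v = 6) ∨ (i = 3 ∧ v = 13) ∨ (i = 4 ∧ v = 1) ∨
  (i = 5 ∧ v = 12) ∨ (i = 6 ∧ v = 4) ∨ (i = 7 ∧ v = 14) ∨ (i = 8 ∧ v = 2) ∨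
  (i = 9 ∧ v = 8) ∨ (i = 10 ∧ v = 7) ∨ (i = 11 ∧ v = 10) ∨ (i = 12 ∧ v = 3) ∨
  (i = 13 ∧ v = 9) ∨ (i = 14 ∧ v = 5) ∨ (i = 15 ∧ v = 15)

lemma achar2 (i : ℕ) (h1 : 1 ≤ i) (h2 : i ≤ 15) : D2 i (a2 i) := by
  interval_cases i <;> simp [a2, D2]

theorem stmt14 :
    ∀ k : ℕ, 2 ≤ k →
    ∃ a : ℕ → ℕ, Set.BijOn a (Set.Icc 1 (8*k - 1)) (Set.Icc 1 (8*k - 1)) ∧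
      (∀ i, 1 ≤ i → i ≤ 8*k - 1 → i % 4 = 1 → seqWeight (8*k - 1) a i = 9*k - 1) ∧
      (∀ i, 1 ≤ i → i ≤ 8*k - 1 → i % 4 = 3 → seqWeight (8*k - 1) a i = 11*k - 2) := by
  intro k hk
  by_cases hk2 : k = 2
  · subst hk2
    refine ⟨a2, ?_, ?_, ?_⟩
    · have hmt : Set.MapsTo a2 (Set.Icc 1 (8*2 - 1)) (Set.Icc 1 (8*2 - 1)) := by
        intro i hi
        simp only [Set.mem_Icc] at *
        have := achar2 i hi.1 (by omega)
        unfold D2 at this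
        omega
      have hinj : Set.InjOn a2 (Set.Icc 1 (8*2 - 1)) := by
        intro i hi j hj hij
        simp only [Set.mem_Icc] at hi hj
        have h1 := achar2 i hi.1 (by omega)
        have h2 := achar2 j hj.1 (by omega)
        unfold D2 at h1 h2
        omega
      refine ⟨hmt, hinj, ?_⟩
      have himg : a2 '' (Set.Icc 1 (8*2 - 1)) = Set.Icc 1 (8*2 - 1) :=
        Set.eq_of_subset_of_ncard_le hmt.image_subset
          (le_of_eq (Set.ncard_image_of_injOn hinj).symm) (Set.finite_Icc _ _)
      exact fun y hy => himg.symm ▸ hy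
    · intro i hi1 hi2 hmod
      by_cases h1 : i = 1
      · subst h1
        have c1 := achar2 1 (by omega) (by omega)
        have c2 := achar2 (1+1) (by omega) (by omega)
        unfold D2 at c1 c2
        unfold seqWeight
        split_ifs <;> omega
      · have c0 := achar2 (i-1) (by omega) (by omega)
        have c1 := achar2 i (by omega) (by omega)
        have c2 := achar2 (i+1) (by omega) (by omega)
        unfold D2 at c0 c1 c2
        unfold seqWeight
        split_ifs <;> omega
    · intro i hi1 hi2 hmod
      by_cases hlast : i = 15
      · subst hlast
        have c0 := achar2 (15-1) (by omega) (by omega)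
        have c1 := achar2 15 (by omega) (by omega)
        unfold D2 at c0 c1
        unfold seqWeight
        split_ifs <;> omega
      · have c0 := achar2 (i-1) (by omega) (by omega)
        have c1 := achar2 i (by omega) (by omega)
        have c2 := achar2 (i+1) (by omega) (by omega)
        unfold D2 at c0 c1 c2
        unfold seqWeight
        split_ifs <;> omega
  · have hk3 : 3 ≤ k := by omega
    refine ⟨af k, ?_, ?_, ?_⟩
    · have hmt : Set.MapsTo (af k) (Set.Icc 1 (8*k - 1)) (Set.Icc 1 (8*k - 1)) := by
        intro i hi
        simp only [Set.mem_Icc] at *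
        have := achar k i hk3
        unfold D C2 C0 C3 C1 at this
        omega
      have hinj : Set.InjOn (af k) (Set.Icc 1 (8*k - 1)) := by
        intro i hi j hj hij
        simp only [Set.mem_Icc] at hi hj
        have h1 := achar k i hk3
        have h2 := achar k j hk3
        unfold D C2 C0 C3 C1 at h1 h2
        omega
      refine ⟨hmt, hinj, ?_⟩
      have himg : af k '' (Set.Icc 1 (8*k - 1)) = Set.Icc 1 (8*k - 1) :=
        Set.eq_of_subset_of_ncard_le hmt.image_subset
          (le_of_eq (Set.ncard_image_of_injOn hinj).symm) (Set.finite_Icc _ _)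
      exact fun y hy => himg.symm ▸ hy
    · intro i hi1 hi2 hmod
      by_cases h1 : i = 1
      · subst h1
        have c1 := achar k 1 hk3
        have c2 := achar k (1+1) hk3
        unfold D C2 C0 C3 C1 at c1 c2
        unfold seqWeight
        split_ifs <;> omega
      · have c0 := achar k (i-1) hk3
        have c1 := achar k i hk3
        have c2 := achar k (i+1) hk3
        unfold D C2 C0 C3 C1 at c0 c1 c2
        unfold seqWeight
        split_ifs <;> omega
    · intro i hi1 hi2 hmod
      by_cases hlast : i = 8*k - 1
      · subst hlast
        have c0 := achar k (8*k - 1 - 1) hk3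
        have c1 := achar k (8*k - 1) hk3
        unfold D C2 C0 C3 C1 at c0 c1
        unfold seqWeight
        split_ifs <;> omega
      · have c0 := achar k (i-1) hk3
        have c1 := achar k i hk3
        have c2 := achar k (i+1) hk3
        unfold D C2 C0 C3 C1 at c0 c1 c2
        unfold seqWeight
        split_ifs <;> omega
end

section
/- For every integer k ≥ 1, there exists a permutation a₁, …, a_m of {1, …, m} with m = 8k + 3 such that every position i ≡ 1 (mod 4) has weight 11k + 4 and every position i ≡ 3 (mod 4) has weight 9k + 3. -/
/-- the permutation -/
def permF (k i : ℕ) : ℕ :=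
  if i = 1 then 8*k+3
  else if i % 4 = 0 then 2*k+1 - i/4
  else if i % 8 = 1 then 6*k+2 + i/8
  else if i % 8 = 2 then 3*k+1 + i/8
  else if i % 8 = 3 then 4*k+2 + i/8
  else if i % 8 = 5 then 7*k+3 + i/8
  else if i % 8 = 6 then 2*k+1 + i/8
  else 5*k+3 + i/8

/-- the inverse -/
def permG (k v : ℕ) : ℕ :=
  if v = 8*k+3 then 1
  else if v ≤ 2*k then 8*k+4 - 4*v
  else if v ≤ 3*k then 8*(v-(2*k+1))+6
  else if v ≤ 4*k+1 then 8*(v-(3*k+1))+2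
  else if v ≤ 5*k+2 then 8*(v-(4*k+2))+3
  else if v ≤ 6*k+2 then 8*(v-(5*k+3))+7
  else if v ≤ 7*k+2 then 8*(v-(6*k+2))+1
  else 8*(v-(7*k+3))+5

lemma permF_one (k : ℕ) : permF k 1 = 8*k+3 := by
  simp [permF]

lemma permF_1 (k t : ℕ) : permF k (8*t+9) = 6*k+3+t := by
  simp only [permF]
  rw [if_neg (by omega), if_neg (by omega), if_pos (by omega)]
  omega

lemma permF_2 (k t : ℕ) : permF k (8*t+2) = 3*k+1+t := by
  simp only [permF]
  rw [if_neg (by omega), if_neg (by omega), if_neg (by omega), if_pos (by omega)]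
  omega

lemma permF_3 (k t : ℕ) : permF k (8*t+3) = 4*k+2+t := by
  simp only [permF]
  rw [if_neg (by omega), if_neg (by omega), if_neg (by omega), if_neg (by omega),
    if_pos (by omega)]
  omega

lemma permF_4 (k t : ℕ) : permF k (4*t+4) = 2*k - t := by
  simp only [permF]
  rw [if_neg (by omega), if_pos (by omega)]
  omega

lemma permF_5 (k t : ℕ) : permF k (8*t+5) = 7*k+3+t := by
  simp only [permF]
  rw [if_neg (by omega), if_neg (by omega), if_neg (by omega), if_neg (by omega),
    if_neg (by omega), if_pos (by omega)]
  omega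

lemma permF_6 (k t : ℕ) : permF k (8*t+6) = 2*k+1+t := by
  simp only [permF]
  rw [if_neg (by omega), if_neg (by omega), if_neg (by omega), if_neg (by omega),
    if_neg (by omega), if_neg (by omega), if_pos (by omega)]
  omega

lemma permF_7 (k t : ℕ) : permF k (8*t+7) = 5*k+3+t := by
  simp only [permF]
  rw [if_neg (by omega), if_neg (by omega), if_neg (by omega), if_neg (by omega),
    if_neg (by omega), if_neg (by omega), if_neg (by omega)]
  omega

lemma permKey (k : ℕ) (hk : 1 ≤ k) (i : ℕ) (hi : 1 ≤ i) (hi2 : i ≤ 8*k+3) :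
    1 ≤ permF k i ∧ permF k i ≤ 8*k+3 ∧ permG k (permF k i) = i := by
  rcases eq_or_ne i 1 with rfl | h1
  · rw [permF_one]
    refine ⟨by omega, by omega, ?_⟩
    simp [permG]
  have hc : i % 4 = 0 ∨ (i % 8 = 1 ∧ 9 ≤ i) ∨ i % 8 = 2 ∨ i % 8 = 3 ∨ i % 8 = 5 ∨
      i % 8 = 6 ∨ i % 8 = 7 := by omega
  rcases hc with h | h | h | h | h | h | h
  · obtain ⟨t, rfl⟩ : ∃ t, i = 4*t+4 := ⟨i/4 - 1, by omega⟩
    rw [permF_4]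
    refine ⟨by omega, by omega, ?_⟩
    simp only [permG]
    rw [if_neg (by omega), if_pos (by omega)]
    omega
  · obtain ⟨t, rfl⟩ : ∃ t, i = 8*t+9 := ⟨i/8 - 1, by omega⟩
    rw [permF_1]
    refine ⟨by omega, by omega, ?_⟩
    simp only [permG]
    rw [if_neg (by omega), if_neg (by omega), if_neg (by omega), if_neg (by omega),
      if_neg (by omega), if_neg (by omega), if_pos (by omega)]
    omega
  · obtain ⟨t, rfl⟩ : ∃ t, i = 8*t+2 := ⟨i/8, by omega⟩
    rw [permF_2]
    refine ⟨by omega, by omega, ?_⟩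
    simp only [permG]
    rw [if_neg (by omega), if_neg (by omega), if_neg (by omega), if_pos (by omega)]
    omega
  · obtain ⟨t, rfl⟩ : ∃ t, i = 8*t+3 := ⟨i/8, by omega⟩
    rw [permF_3]
    refine ⟨by omega, by omega, ?_⟩
    simp only [permG]
    rw [if_neg (by omega), if_neg (by omega), if_neg (by omega), if_neg (by omega),
      if_pos (by omega)]
    omega
  · obtain ⟨t, rfl⟩ : ∃ t, i = 8*t+5 := ⟨i/8, by omega⟩
    rw [permF_5]
    refine ⟨by omega, by omega, ?_⟩
    simp only [permG]
    rw [if_neg (by omega), if_neg (by omega), if_neg (by omega), if_neg (by omega),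
      if_neg (by omega), if_neg (by omega), if_neg (by omega)]
    omega
  · obtain ⟨t, rfl⟩ : ∃ t, i = 8*t+6 := ⟨i/8, by omega⟩
    rw [permF_6]
    refine ⟨by omega, by omega, ?_⟩
    simp only [permG]
    rw [if_neg (by omega), if_neg (by omega), if_pos (by omega)]
    omega
  · obtain ⟨t, rfl⟩ : ∃ t, i = 8*t+7 := ⟨i/8, by omega⟩
    rw [permF_7]
    refine ⟨by omega, by omega, ?_⟩
    simp only [permG]
    rw [if_neg (by omega), if_neg (by omega), if_neg (by omega), if_neg (by omega),
      if_neg (by omega), if_pos (by omega)]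
    omega

lemma permKey2 (k : ℕ) (hk : 1 ≤ k) (v : ℕ) (hv : 1 ≤ v) (hv2 : v ≤ 8*k+3) :
    1 ≤ permG k v ∧ permG k v ≤ 8*k+3 ∧ permF k (permG k v) = v := by
  have hc : v = 8*k+3 ∨ v ≤ 2*k ∨ (2*k+1 ≤ v ∧ v ≤ 3*k) ∨ (3*k+1 ≤ v ∧ v ≤ 4*k+1) ∨
      (4*k+2 ≤ v ∧ v ≤ 5*k+2) ∨ (5*k+3 ≤ v ∧ v ≤ 6*k+2) ∨ (6*k+3 ≤ v ∧ v ≤ 7*k+2) ∨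
      (7*k+3 ≤ v ∧ v ≤ 8*k+2) := by omega
  rcases hc with rfl | h | h | h | h | h | h | h
  · refine ⟨?_, ?_, ?_⟩ <;> simp [permG, permF]
  · have hg : permG k v = 4*(2*k-v)+4 := by
      simp only [permG]; rw [if_neg (by omega), if_pos (by omega)]; omega
    rw [hg, permF_4]
    exact ⟨by omega, by omega, by omega⟩
  · have hg : permG k v = 8*(v-(2*k+1))+6 := by
      simp only [permG]; rw [if_neg (by omega), if_neg (by omega), if_pos (by omega)]
    rw [hg, permF_6]
    exact ⟨by omega, by omega, by omega⟩
  · have hg : permG k v = 8*(v-(3*k+1))+2 := by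
      simp only [permG]
      rw [if_neg (by omega), if_neg (by omega), if_neg (by omega), if_pos (by omega)]
    rw [hg, permF_2]
    exact ⟨by omega, by omega, by omega⟩
  · have hg : permG k v = 8*(v-(4*k+2))+3 := by
      simp only [permG]
      rw [if_neg (by omega), if_neg (by omega), if_neg (by omega), if_neg (by omega),
        if_pos (by omega)]
    rw [hg, permF_3]
    exact ⟨by omega, by omega, by omega⟩
  · have hg : permG k v = 8*(v-(5*k+3))+7 := by
      simp only [permG]
      rw [if_neg (by omega), if_neg (by omega), if_neg (by omega), if_neg (by omega),
        if_neg (by omega), if_pos (by omega)]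
    rw [hg, permF_7]
    exact ⟨by omega, by omega, by omega⟩
  · have hg : permG k v = 8*(v-(6*k+3))+9 := by
      simp only [permG]
      rw [if_neg (by omega), if_neg (by omega), if_neg (by omega), if_neg (by omega),
        if_neg (by omega), if_neg (by omega), if_pos (by omega)]
      omega
    rw [hg, permF_1]
    exact ⟨by omega, by omega, by omega⟩
  · have hg : permG k v = 8*(v-(7*k+3))+5 := by
      simp only [permG]
      rw [if_neg (by omega), if_neg (by omega), if_neg (by omega), if_neg (by omega),
        if_neg (by omega), if_neg (by omega), if_neg (by omega)]
    rw [hg, permF_5]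
    exact ⟨by omega, by omega, by omega⟩

theorem stmt15 :
    ∀ k : ℕ, 1 ≤ k →
    ∃ a : ℕ → ℕ, Set.BijOn a (Set.Icc 1 (8*k + 3)) (Set.Icc 1 (8*k + 3)) ∧
      (∀ i, 1 ≤ i → i ≤ 8*k + 3 → i % 4 = 1 → seqWeight (8*k + 3) a i = 11*k + 4) ∧
      (∀ i, 1 ≤ i → i ≤ 8*k + 3 → i % 4 = 3 → seqWeight (8*k + 3) a i = 9*k + 3) := by
  intro k hk
  refine ⟨permF k, ?_, ?_, ?_⟩
  · refine Set.InvOn.bijOn (f' := permG k) ⟨?_, ?_⟩ ?_ ?_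
    · intro i hi
      simp only [Set.mem_Icc] at hi
      exact (permKey k hk i hi.1 hi.2).2.2
    · intro v hv
      simp only [Set.mem_Icc] at hv
      exact (permKey2 k hk v hv.1 hv.2).2.2
    · intro i hi
      simp only [Set.mem_Icc] at hi ⊢
      exact ⟨(permKey k hk i hi.1 hi.2).1, (permKey k hk i hi.1 hi.2).2.1⟩
    · intro v hv
      simp only [Set.mem_Icc] at hv ⊢
      exact ⟨(permKey2 k hk v hv.1 hv.2).1, (permKey2 k hk v hv.1 hv.2).2.1⟩
  · intro i hi1 hi2 hi4
    simp only [seqWeight]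
    rcases eq_or_ne i 1 with rfl | h1
    · rw [if_neg (by omega), if_pos (by omega)]
      rw [show (1:ℕ)+1 = 8*0+2 by norm_num, permF_2, permF_one]
      omega
    have hc : (i % 8 = 1 ∧ 9 ≤ i) ∨ i % 8 = 5 := by omega
    rcases hc with h | h
    · obtain ⟨t, rfl⟩ : ∃ t, i = 8*t+9 := ⟨i/8 - 1, by omega⟩
      rw [if_pos (by omega), if_pos (by omega)]
      rw [show 8*t+9-1 = 4*(2*t+1)+4 by omega, show 8*t+9+1 = 8*(t+1)+2 by omega,
        permF_4, permF_2, permF_1]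
      omega
    · obtain ⟨t, rfl⟩ : ∃ t, i = 8*t+5 := ⟨i/8, by omega⟩
      rw [if_pos (by omega), if_pos (by omega)]
      rw [show 8*t+5-1 = 4*(2*t)+4 by omega, show 8*t+5+1 = 8*t+6 by omega,
        permF_4, permF_5, permF_6]
      omega
  · intro i hi1 hi2 hi4
    simp only [seqWeight]
    have hc : (i % 8 = 3 ∧ i < 8*k+3) ∨ i = 8*k+3 ∨ i % 8 = 7 := by omega
    rcases hc with ⟨h, hlt⟩ | rfl | h
    · obtain ⟨t, rfl⟩ : ∃ t, i = 8*t+3 := ⟨i/8, by omega⟩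
      rw [if_pos (by omega), if_pos (by omega)]
      rw [show 8*t+3-1 = 8*t+2 by omega, show 8*t+3+1 = 4*(2*t)+4 by omega,
        permF_4, permF_2, permF_3]
      omega
    · rw [if_pos (by omega), if_neg (by omega)]
      rw [show 8*k+3-1 = 8*k+2 by omega, permF_2, permF_3]
      omega
    · obtain ⟨t, rfl⟩ : ∃ t, i = 8*t+7 := ⟨i/8, by omega⟩
      rw [if_pos (by omega), if_pos (by omega)]
      rw [show 8*t+7-1 = 8*t+6 by omega, show 8*t+7+1 = 4*(2*t+1)+4 by omega,
        permF_4, permF_6, permF_7]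
      omega
end

section
/- For every integer j ≥ 1, there exists a permutation a₁, …, a_m of {1, …, m} with m = 8j + 2 such that every position i ≡ 1 (mod 4) has weight 13j + 3 and every position i ≡ 3 (mod 4) has weight 9j + 2. -/
def seqA (j i : ℕ) : ℕ :=
  if i = 8*j+1 then 5*j+1
  else if i = 8*j+2 then 6*j+2
  else if (i-1) % 4 = 0 then (if (i-1)/4 < j then 8*j+1-2*((i-1)/4) else 10*j+2-2*((i-1)/4))
  else if (i-1) % 4 = 1 then (if (i-1)/4 < j then 5*j+2+(i-1)/4 else 3*j+1+(i-1)/4)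
  else if (i-1) % 4 = 2 then (if (i-1)/4 < j then 4*j-1-2*((i-1)/4) else 6*j-2*((i-1)/4))
  else (i-1)/4+1

lemma seqA_t1 (j : ℕ) : seqA j (8*j+1) = 5*j+1 := by
  unfold seqA; rw [if_pos rfl]

lemma seqA_t2 (j : ℕ) : seqA j (8*j+2) = 6*j+2 := by
  unfold seqA; rw [if_neg (by omega : ¬ 8*j+2 = 8*j+1), if_pos rfl]

lemma seqA_r0lt (j i : ℕ) (h2 : i ≤ 8*j) (hr : (i-1)%4 = 0) (hk : (i-1)/4 < j) :
    seqA j i = 8*j+1-2*((i-1)/4) := by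
  simp only [seqA]; rw [if_neg (by omega), if_neg (by omega), if_pos hr, if_pos hk]

lemma seqA_r0ge (j i : ℕ) (h2 : i ≤ 8*j) (hr : (i-1)%4 = 0) (hk : ¬ (i-1)/4 < j) :
    seqA j i = 10*j+2-2*((i-1)/4) := by
  simp only [seqA]; rw [if_neg (by omega), if_neg (by omega), if_pos hr, if_neg hk]

lemma seqA_r1lt (j i : ℕ) (h2 : i ≤ 8*j) (hr : (i-1)%4 = 1) (hk : (i-1)/4 < j) :
    seqA j i = 5*j+2+(i-1)/4 := by
  simp only [seqA]
  rw [if_neg (by omega), if_neg (by omega), if_neg (by omega), if_pos hr, if_pos hk]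

lemma seqA_r1ge (j i : ℕ) (h2 : i ≤ 8*j) (hr : (i-1)%4 = 1) (hk : ¬ (i-1)/4 < j) :
    seqA j i = 3*j+1+(i-1)/4 := by
  simp only [seqA]
  rw [if_neg (by omega), if_neg (by omega), if_neg (by omega), if_pos hr, if_neg hk]

lemma seqA_r2lt (j i : ℕ) (h2 : i ≤ 8*j) (hr : (i-1)%4 = 2) (hk : (i-1)/4 < j) :
    seqA j i = 4*j-1-2*((i-1)/4) := by
  simp only [seqA]
  rw [if_neg (by omega), if_neg (by omega), if_neg (by omega), if_neg (by omega),
    if_pos hr, if_pos hk]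

lemma seqA_r2ge (j i : ℕ) (h2 : i ≤ 8*j) (hr : (i-1)%4 = 2) (hk : ¬ (i-1)/4 < j) :
    seqA j i = 6*j-2*((i-1)/4) := by
  simp only [seqA]
  rw [if_neg (by omega), if_neg (by omega), if_neg (by omega), if_neg (by omega),
    if_pos hr, if_neg hk]

lemma seqA_r3 (j i : ℕ) (h2 : i ≤ 8*j) (hr : (i-1)%4 = 3) :
    seqA j i = (i-1)/4+1 := by
  simp only [seqA]
  rw [if_neg (by omega), if_neg (by omega), if_neg (by omega), if_neg (by omega),
    if_neg (by omega)]

lemma seqA_spec (j i : ℕ) (h1 : 1 ≤ i) (h2 : i ≤ 8*j+2) :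
    (i = 8*j+1 ∧ seqA j i = 5*j+1) ∨
    (i = 8*j+2 ∧ seqA j i = 6*j+2) ∨
    (i ≤ 8*j ∧ (i-1) % 4 = 0 ∧ (i-1)/4 < j ∧ seqA j i = 8*j+1-2*((i-1)/4)) ∨
    (i ≤ 8*j ∧ (i-1) % 4 = 0 ∧ j ≤ (i-1)/4 ∧ seqA j i = 10*j+2-2*((i-1)/4)) ∨
    (i ≤ 8*j ∧ (i-1) % 4 = 1 ∧ (i-1)/4 < j ∧ seqA j i = 5*j+2+(i-1)/4) ∨
    (i ≤ 8*j ∧ (i-1) % 4 = 1 ∧ j ≤ (i-1)/4 ∧ seqA j i = 3*j+1+(i-1)/4) ∨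
    (i ≤ 8*j ∧ (i-1) % 4 = 2 ∧ (i-1)/4 < j ∧ seqA j i = 4*j-1-2*((i-1)/4)) ∨
    (i ≤ 8*j ∧ (i-1) % 4 = 2 ∧ j ≤ (i-1)/4 ∧ seqA j i = 6*j-2*((i-1)/4)) ∨
    (i ≤ 8*j ∧ (i-1) % 4 = 3 ∧ seqA j i = (i-1)/4+1) := by
  rcases (by omega : i = 8*j+1 ∨ i = 8*j+2 ∨ i ≤ 8*j) with h | h | h
  · exact Or.inl ⟨h, h ▸ seqA_t1 j⟩
  · exact Or.inr (Or.inl ⟨h, h ▸ seqA_t2 j⟩)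
  · rcases (by omega : (i-1)%4 = 0 ∨ (i-1)%4 = 1 ∨ (i-1)%4 = 2 ∨ (i-1)%4 = 3)
      with hr | hr | hr | hr
    · by_cases hk : (i-1)/4 < j
      · exact Or.inr (Or.inr (Or.inl ⟨h, hr, hk, seqA_r0lt j i h hr hk⟩))
      · exact Or.inr (Or.inr (Or.inr (Or.inl ⟨h, hr, by omega, seqA_r0ge j i h hr hk⟩)))
    · by_cases hk : (i-1)/4 < j
      · exact Or.inr (Or.inr (Or.inr (Or.inr (Or.inl ⟨h, hr, hk, seqA_r1lt j i h hr hk⟩))))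
      · exact Or.inr (Or.inr (Or.inr (Or.inr (Or.inr (Or.inl ⟨h, hr, by omega, seqA_r1ge j i h hr hk⟩)))))
    · by_cases hk : (i-1)/4 < j
      · exact Or.inr (Or.inr (Or.inr (Or.inr (Or.inr (Or.inr (Or.inl ⟨h, hr, hk, seqA_r2lt j i h hr hk⟩))))))
      · exact Or.inr (Or.inr (Or.inr (Or.inr (Or.inr (Or.inr (Or.inr (Or.inl ⟨h, hr, by omega, seqA_r2ge j i h hr hk⟩)))))))
    · exact Or.inr (Or.inr (Or.inr (Or.inr (Or.inr (Or.inr (Or.inr (Or.inr ⟨h, hr, seqA_r3 j i h hr⟩)))))))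

theorem stmt18 :
    ∀ j : ℕ, 1 ≤ j →
    ∃ a : ℕ → ℕ, Set.BijOn a (Set.Icc 1 (8*j + 2)) (Set.Icc 1 (8*j + 2)) ∧
      (∀ i, 1 ≤ i → i ≤ 8*j + 2 → i % 4 = 1 → seqWeight (8*j + 2) a i = 13*j + 3) ∧
      (∀ i, 1 ≤ i → i ≤ 8*j + 2 → i % 4 = 3 → seqWeight (8*j + 2) a i = 9*j + 2) := by
  intro j hj
  refine ⟨seqA j, ?_, ?_, ?_⟩
  · have hmaps : Set.MapsTo (seqA j) (Set.Icc 1 (8*j + 2)) (Set.Icc 1 (8*j + 2)) := by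
      intro i hi
      simp only [Set.mem_Icc] at hi ⊢
      have := seqA_spec j i hi.1 hi.2
      omega
    have hinj : Set.InjOn (seqA j) (Set.Icc 1 (8*j + 2)) := by
      intro i hi i' hi' h
      simp only [Set.mem_Icc] at hi hi'
      have s1 := seqA_spec j i hi.1 hi.2
      have s2 := seqA_spec j i' hi'.1 hi'.2
      omega
    exact ((Set.finite_Icc _ _).injOn_iff_bijOn_of_mapsTo hmaps).mp hinj
  · intro i h1 h2 h4
    have s2 := seqA_spec j i h1 h2
    have s3 := seqA_spec j (i+1) (by omega) (by omega)
    unfold seqWeight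
    split_ifs with hA hB hB
    · have s1 := seqA_spec j (i-1) (by omega) (by omega)
      omega
    · omega
    · omega
    · omega
  · intro i h1 h2 h4
    have s2 := seqA_spec j i h1 h2
    have s3 := seqA_spec j (i+1) (by omega) (by omega)
    have s1 := seqA_spec j (i-1) (by omega) (by omega)
    unfold seqWeight
    split_ifs <;> omega
end
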